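/- Let G=(V,E) be a finite simple undirected graph with n=|V| vertices and m=|E| edges, let 0 < p_e < 1/2 for all e ∈ E and 0 < λ_v ≤ 1 for all v ∈ V, and set η_v = (1−λ_v)/(1+λ_v). Define η̂_v = 1/n if η_v ≤ 1/n and η̂_v = η_v otherwise, and λ̂_v = (1−η̂_v)/(1+η̂_v). Let P_wrc and P̂_wrc be the lazy edge-flipping (Metropolis) dynamics for the weighted random cluster distributions with edge parameters (2p_e)_{e∈E} and vertex weights λ and λ̂, respectively. Then for all Z, Z' ⊆ E with |Z ⊕ Z'| ≤ 1, 1/2 ≤ P̂_wrc(Z,Z')/P_wrc(Z,Z') ≤ 2. -/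

import Mathlib

open Finset
open scoped Classical

noncomputable section

variable {V : Type*} [Fintype V] [DecidableEq V]

/-- The vertex set of the connected component of `v` in the graph `(V, S)`. -/
def compOf (S : Finset (Sym2 V)) (v : V) : Finset V :=
  Finset.univ.filter fun u => (SimpleGraph.fromEdgeSet (↑S : Set (Sym2 V))).Reachable v u

/-- `κ(V,S)`: the set of vertex sets of connected components of the graph `(V, S)`. -/
def kappa (S : Finset (Sym2 V)) : Finset (Finset V) :=
  Finset.univ.image (compOf S)

/-- `∏_{C ∈ κ(V,S)} (1 + ∏_{u ∈ C} λ_u)`. -/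
def clusterProd (S : Finset (Sym2 V)) (lam : V → ℝ) : ℝ :=
  ∏ C ∈ kappa S, (1 + ∏ u ∈ C, lam u)

/-- Weight of an edge subset `S ⊆ E₀` in the weighted random cluster model. -/
def wtWRC (E₀ : Finset (Sym2 V)) (q : Sym2 V → ℝ) (lam : V → ℝ) (S : Finset (Sym2 V)) : ℝ :=
  (∏ e ∈ S, q e) * (∏ f ∈ E₀ \ S, (1 - q f)) * clusterProd S lam

/-- Partition function of the weighted random cluster model. -/
def ZWRC (E₀ : Finset (Sym2 V)) (q : Sym2 V → ℝ) (lam : V → ℝ) : ℝ :=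
  ∑ S ∈ E₀.powerset, wtWRC E₀ q lam S

/-- The weighted random cluster distribution. -/
def piWRC (E₀ : Finset (Sym2 V)) (q : Sym2 V → ℝ) (lam : V → ℝ) (S : Finset (Sym2 V)) : ℝ :=
  wtWRC E₀ q lam S / ZWRC E₀ q lam

/-- The monochromatic edges of a spin configuration `σ`. -/
def monoEdges (E₀ : Finset (Sym2 V)) (σ : V → Bool) : Finset (Sym2 V) :=
  E₀.filter fun e => (e.map σ).IsDiag

/-- Weight of a spin configuration in the Ising model. -/
def wtIsing (E₀ : Finset (Sym2 V)) (β : Sym2 V → ℝ) (lam : V → ℝ) (σ : V → Bool) : ℝ :=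
  (∏ e ∈ monoEdges E₀ σ, β e) * ∏ v : V, (if σ v then lam v else 1)

/-- Ising partition function. -/
def ZIsing (E₀ : Finset (Sym2 V)) (β : Sym2 V → ℝ) (lam : V → ℝ) : ℝ :=
  ∑ σ : V → Bool, wtIsing E₀ β lam σ

/-- Ising Gibbs distribution. -/
def piIsing (E₀ : Finset (Sym2 V)) (β : Sym2 V → ℝ) (lam : V → ℝ) (σ : V → Bool) : ℝ :=
  wtIsing E₀ β lam σ / ZIsing E₀ β lam

/-- Vertices of odd degree in the graph `(V, S)`. -/
def oddVerts (S : Finset (Sym2 V)) : Finset V :=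
  Finset.univ.filter fun v => Odd (S.filter fun e => v ∈ e).card

/-- Weight of an edge subset in the subgraph-world model. -/
def wtSG (E₀ : Finset (Sym2 V)) (p : Sym2 V → ℝ) (η : V → ℝ) (S : Finset (Sym2 V)) : ℝ :=
  (∏ e ∈ S, p e) * (∏ f ∈ E₀ \ S, (1 - p f)) * ∏ v ∈ oddVerts S, η v

/-- Subgraph-world partition function. -/
def ZSG (E₀ : Finset (Sym2 V)) (p : Sym2 V → ℝ) (η : V → ℝ) : ℝ :=
  ∑ S ∈ E₀.powerset, wtSG E₀ p η S

/-- Subgraph-world distribution. -/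
def piSG (E₀ : Finset (Sym2 V)) (p : Sym2 V → ℝ) (η : V → ℝ) (S : Finset (Sym2 V)) : ℝ :=
  wtSG E₀ p η S / ZSG E₀ p η

/-- The transformation `P_{I→R}` from Ising configurations to edge subsets. -/
def PIR (E₀ : Finset (Sym2 V)) (β : Sym2 V → ℝ) (σ : V → Bool) (S : Finset (Sym2 V)) : ℝ :=
  if S ⊆ monoEdges E₀ σ then
    (∏ e ∈ S, (1 - (β e)⁻¹)) * ∏ f ∈ monoEdges E₀ σ \ S, (β f)⁻¹
  else 0

/-- The transformation `P_{R→I}` from edge subsets to Ising configurations. -/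
def PRI (E₀ : Finset (Sym2 V)) (lam : V → ℝ) (S : Finset (Sym2 V)) (σ : V → Bool) : ℝ :=
  if S ⊆ monoEdges E₀ σ then
    ∏ C ∈ kappa S, ((∏ v ∈ C, if σ v then lam v else 1) / (1 + ∏ v ∈ C, lam v))
  else 0

/-- Swendsen-Wang dynamics for the Ising model: `P_{I→R} ⬝ P_{R→I}`. -/
def PSWIsing (E₀ : Finset (Sym2 V)) (β : Sym2 V → ℝ) (lam : V → ℝ) (σ τ : V → Bool) : ℝ :=
  ∑ S ∈ E₀.powerset, PIR E₀ β σ S * PRI E₀ lam S τ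

/-- Swendsen-Wang dynamics for the weighted random cluster model: `P_{R→I} ⬝ P_{I→R}`. -/
def PSWwrc (E₀ : Finset (Sym2 V)) (β : Sym2 V → ℝ) (lam : V → ℝ)
    (S S' : Finset (Sym2 V)) : ℝ :=
  ∑ σ : V → Bool, PRI E₀ lam S σ * PIR E₀ β σ S'

/-- Lazy edge-flipping (Metropolis) dynamics for a distribution `pi` on subsets of `E₀`. -/
def PEF (E₀ : Finset (Sym2 V)) (pi : Finset (Sym2 V) → ℝ) (x y : Finset (Sym2 V)) : ℝ :=
  if x = y then
    1 - (1 / (2 * (E₀.card : ℝ))) * ∑ e ∈ E₀, min 1 (pi (symmDiff x {e}) / pi x)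
  else if (symmDiff x y).card = 1 then
    (1 / (2 * (E₀.card : ℝ))) * min 1 (pi y / pi x)
  else 0

/-- Variance of `f` with respect to a distribution `pi` supported on `states`. -/
def varOn {α : Type*} (states : Finset α) (pi f : α → ℝ) : ℝ :=
  (∑ x ∈ states, pi x * f x ^ 2) - (∑ x ∈ states, pi x * f x) ^ 2

/-- Dirichlet form of a Markov kernel `P` with stationary distribution `pi` on `states`. -/
def dirichletOn {α : Type*} (states : Finset α) (pi : α → ℝ) (P : α → α → ℝ) (f : α → ℝ) : ℝ :=
  ∑ x ∈ states, pi x * f x * (f x - ∑ y ∈ states, P x y * f y)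

/-- Spectral gap of a reversible Markov kernel `P` with stationary distribution `pi`. -/
def gapOn {α : Type*} (states : Finset α) (pi : α → ℝ) (P : α → α → ℝ) : ℝ :=
  sInf ((fun f : α → ℝ => dirichletOn states pi P f / varOn states pi f) ''
    {f | varOn states pi f ≠ 0})

/-- Total variation distance between two distributions on `states`. -/
def dTV {α : Type*} (states : Finset α) (μ ν : α → ℝ) : ℝ :=
  (1 / 2) * ∑ z ∈ states, |μ z - ν z|

/-- `t`-step transition probabilities of the Markov kernel `P` on state space `states`. -/
def kpow {α : Type*} (states : Finset α) (P : α → α → ℝ) : ℕ → α → α → ℝ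
  | 0 => fun x y => if x = y then 1 else 0
  | (t + 1) => fun x y => ∑ z ∈ states, P x z * kpow states P t z y


def fE (S : Finset (Sym2 V)) : SimpleGraph V := SimpleGraph.fromEdgeSet (↑S : Set (Sym2 V))

omit [Fintype V] [DecidableEq V] in
lemma fE_adj {S : Finset (Sym2 V)} {a b : V} : (fE S).Adj a b ↔ s(a,b) ∈ S ∧ a ≠ b := by
  simp [fE]

lemma reach_insert_iff {Z : Finset (Sym2 V)} {u v x y : V} (huv : u ≠ v) :
    (fE (insert s(u,v) Z)).Reachable x y ↔
      (fE Z).Reachable x y ∨ ((fE Z).Reachable x u ∧ (fE Z).Reachable v y) ∨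
        ((fE Z).Reachable x v ∧ (fE Z).Reachable u y) := by
  constructor
  · rintro ⟨w⟩
    induction w with
    | nil => exact Or.inl (SimpleGraph.Reachable.refl _)
    | cons h p ih =>
      rename_i a b c
      rw [fE_adj] at h
      obtain ⟨he, hne⟩ := h
      rw [Finset.mem_insert] at he
      rcases he with he | he
      · rw [Sym2.eq_iff] at he
        rcases he with ⟨rfl, rfl⟩ | ⟨rfl, rfl⟩
        · rcases ih with hR | ⟨h1, h2⟩ | ⟨h1, h2⟩
          · exact Or.inr (Or.inl ⟨SimpleGraph.Reachable.refl _, hR⟩)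
          · exact Or.inl (h1.symm.trans h2)
          · exact Or.inl h2
        · rcases ih with hR | ⟨h1, h2⟩ | ⟨h1, h2⟩
          · exact Or.inr (Or.inr ⟨SimpleGraph.Reachable.refl _, hR⟩)
          · exact Or.inl h2
          · exact Or.inl (h1.symm.trans h2)
      · have hadj : (fE Z).Adj a b := fE_adj.mpr ⟨he, hne⟩
        rcases ih with hR | ⟨h1, h2⟩ | ⟨h1, h2⟩
        · exact Or.inl (hadj.reachable.trans hR)
        · exact Or.inr (Or.inl ⟨hadj.reachable.trans h1, h2⟩)
        · exact Or.inr (Or.inr ⟨hadj.reachable.trans h1, h2⟩)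
  · have hmono : (fE Z) ≤ fE (insert s(u,v) Z) :=
      SimpleGraph.fromEdgeSet_mono (by simp)
    have hadj : (fE (insert s(u,v) Z)).Adj u v := fE_adj.mpr ⟨by simp, huv⟩
    rintro (h | ⟨h1, h2⟩ | ⟨h1, h2⟩)
    · exact h.mono hmono
    · exact ((h1.mono hmono).trans hadj.reachable).trans (h2.mono hmono)
    · exact ((h1.mono hmono).trans hadj.reachable.symm).trans (h2.mono hmono)

lemma mem_compOf {S : Finset (Sym2 V)} {v x : V} :
    x ∈ compOf S v ↔ (fE S).Reachable v x := by
  simp [compOf, fE]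

lemma mem_compOf_self {S : Finset (Sym2 V)} (v : V) : v ∈ compOf S v :=
  mem_compOf.mpr (SimpleGraph.Reachable.refl v)

lemma compOf_eq_of_reachable {S : Finset (Sym2 V)} {v w : V}
    (h : (fE S).Reachable v w) : compOf S v = compOf S w := by
  ext x
  simp only [mem_compOf]
  exact ⟨fun hx => h.symm.trans hx, fun hx => h.trans hx⟩

lemma reachable_of_compOf_eq {S : Finset (Sym2 V)} {v w : V}
    (h : compOf S v = compOf S w) : (fE S).Reachable v w := by
  have := mem_compOf_self (S := S) w
  rw [← h, mem_compOf] at this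
  exact this

lemma mem_kappa {S : Finset (Sym2 V)} {C : Finset V} :
    C ∈ kappa S ↔ ∃ w, C = compOf S w := by
  simp [kappa, eq_comm]

/-- If u,v already connected, kappa unchanged. -/
lemma kappa_insert_of_reachable {Z : Finset (Sym2 V)} {u v : V} (huv : u ≠ v)
    (hr : (fE Z).Reachable u v) : kappa (insert s(u,v) Z) = kappa Z := by
  have hco : compOf (insert s(u,v) Z) = compOf Z := by
    funext w
    ext x
    simp only [mem_compOf]
    rw [reach_insert_iff huv]
    constructor
    · rintro (h | ⟨h1, h2⟩ | ⟨h1, h2⟩)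
      · exact h
      · exact (h1.trans (hr.symm.symm)).trans h2  -- w→u→v→x
      · exact (h1.trans hr.symm).trans h2
    · exact Or.inl
  unfold kappa
  rw [hco]

section merge
variable {Z : Finset (Sym2 V)} {u v : V}

/-- In the merge case, characterize new components. -/
lemma compOf_insert_eq_union (huv : u ≠ v) (hnr : ¬(fE Z).Reachable u v) {w : V}
    (hw : (fE Z).Reachable u w ∨ (fE Z).Reachable v w) :
    compOf (insert s(u,v) Z) w = compOf Z u ∪ compOf Z v := by
  ext x
  simp only [mem_compOf, Finset.mem_union]
  rw [reach_insert_iff huv]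
  constructor
  · rintro (h | ⟨h1, h2⟩ | ⟨h1, h2⟩)
    · rcases hw with hw | hw
      · exact Or.inl (hw.trans h)
      · exact Or.inr (hw.trans h)
    · exact Or.inr h2
    · exact Or.inl h2
  · rintro (h | h)
    · rcases hw with hw | hw
      · exact Or.inl (hw.symm.trans h)
      · exact Or.inr (Or.inr ⟨hw.symm, h⟩)
    · rcases hw with hw | hw
      · exact Or.inr (Or.inl ⟨hw.symm, h⟩)
      · exact Or.inl (hw.symm.trans h)

end merge

section merge2
variable {Z : Finset (Sym2 V)} {u v : V}

lemma compOf_insert_eq_self (huv : u ≠ v) {w : V}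
    (hwu : ¬(fE Z).Reachable u w) (hwv : ¬(fE Z).Reachable v w) :
    compOf (insert s(u,v) Z) w = compOf Z w := by
  ext x
  simp only [mem_compOf]
  rw [reach_insert_iff huv]
  constructor
  · rintro (h | ⟨h1, h2⟩ | ⟨h1, h2⟩)
    · exact h
    · exact absurd h1.symm hwu
    · exact absurd h1.symm hwv
  · exact Or.inl

lemma disjoint_compOf (hnr : ¬(fE Z).Reachable u v) :
    Disjoint (compOf Z u) (compOf Z v) := by
  rw [Finset.disjoint_left]
  intro x hxu hxv
  rw [mem_compOf] at hxu hxv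
  exact hnr (hxu.trans hxv.symm)

lemma kappa_insert_merge (huv : u ≠ v) (hnr : ¬(fE Z).Reachable u v) :
    kappa (insert s(u,v) Z) =
      insert (compOf Z u ∪ compOf Z v) (((kappa Z).erase (compOf Z u)).erase (compOf Z v)) := by
  ext C
  simp only [Finset.mem_insert, Finset.mem_erase, mem_kappa]
  constructor
  · rintro ⟨w, rfl⟩
    by_cases hw : (fE Z).Reachable u w ∨ (fE Z).Reachable v w
    · exact Or.inl (compOf_insert_eq_union huv hnr hw)
    · push_neg at hw
      rw [compOf_insert_eq_self huv hw.1 hw.2]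
      refine Or.inr ⟨?_, ?_, w, rfl⟩
      · intro hC
        exact hw.2 (reachable_of_compOf_eq hC.symm)
      · intro hC
        exact hw.1 (reachable_of_compOf_eq hC.symm)
  · rintro (rfl | ⟨hCv, hCu, w, rfl⟩)
    · exact ⟨u, (compOf_insert_eq_union huv hnr (Or.inl (SimpleGraph.Reachable.refl u))).symm⟩
    · refine ⟨w, ?_⟩
      rw [compOf_insert_eq_self huv (fun h => hCu (compOf_eq_of_reachable h).symm)
        (fun h => hCv (compOf_eq_of_reachable h).symm)]

lemma union_notMem_erase (hnr : ¬(fE Z).Reachable u v) :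
    compOf Z u ∪ compOf Z v ∉ ((kappa Z).erase (compOf Z u)).erase (compOf Z v) := by
  intro h
  have h' := Finset.mem_of_mem_erase (Finset.mem_of_mem_erase h)
  rw [mem_kappa] at h'
  obtain ⟨w, hw⟩ := h'
  have hwmem : w ∈ compOf Z u ∪ compOf Z v := hw ▸ mem_compOf_self w
  rw [Finset.mem_union, mem_compOf, mem_compOf] at hwmem
  have hAB := disjoint_compOf hnr
  rcases hwmem with h1 | h1
  · -- compOf Z w = compOf Z u, but C = A ∪ B ≠ A since v ∈ B \ A
    have : compOf Z u ∪ compOf Z v = compOf Z u := hw ▸ compOf_eq_of_reachable h1.symm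
    have hv : v ∈ compOf Z u := by
      rw [← this, Finset.mem_union]
      exact Or.inr (mem_compOf_self v)
    exact hnr (mem_compOf.mp hv)
  · have : compOf Z u ∪ compOf Z v = compOf Z v := hw ▸ compOf_eq_of_reachable h1.symm
    have hu : u ∈ compOf Z v := by
      rw [← this, Finset.mem_union]
      exact Or.inl (mem_compOf_self u)
    exact hnr (mem_compOf.mp hu).symm

lemma kappa_eq_insert_insert (hnr : ¬(fE Z).Reachable u v) :
    kappa Z = insert (compOf Z u)
      (insert (compOf Z v) (((kappa Z).erase (compOf Z u)).erase (compOf Z v))) := by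
  have hne : compOf Z u ≠ compOf Z v := fun h => hnr (reachable_of_compOf_eq h)
  ext C
  simp only [Finset.mem_insert, Finset.mem_erase]
  constructor
  · intro hC
    by_cases h1 : C = compOf Z u
    · exact Or.inl h1
    by_cases h2 : C = compOf Z v
    · exact Or.inr (Or.inl h2)
    · exact Or.inr (Or.inr ⟨h2, h1, hC⟩)
  · rintro (rfl | rfl | ⟨_, _, hC⟩)
    · exact mem_kappa.mpr ⟨u, rfl⟩
    · exact mem_kappa.mpr ⟨v, rfl⟩
    · exact hC

/-- Merge formula for the cluster product. -/
lemma clusterProd_insert_merge (huv : u ≠ v) (hnr : ¬(fE Z).Reachable u v) (μ : V → ℝ) :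
    clusterProd (insert s(u,v) Z) μ *
      ((1 + ∏ x ∈ compOf Z u, μ x) * (1 + ∏ x ∈ compOf Z v, μ x)) =
    clusterProd Z μ * (1 + (∏ x ∈ compOf Z u, μ x) * (∏ x ∈ compOf Z v, μ x)) := by
  have hne : compOf Z u ≠ compOf Z v := fun h => hnr (reachable_of_compOf_eq h)
  set D := ((kappa Z).erase (compOf Z u)).erase (compOf Z v) with hD
  have hAD : compOf Z u ∉ insert (compOf Z v) D := by
    simp only [Finset.mem_insert, hD, Finset.mem_erase]
    push_neg
    exact ⟨hne, fun _ h => absurd rfl h⟩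
  have hBD : compOf Z v ∉ D := Finset.notMem_erase _ _
  have hUD : compOf Z u ∪ compOf Z v ∉ D := union_notMem_erase hnr
  unfold clusterProd
  rw [kappa_insert_merge huv hnr]
  conv_rhs => rw [kappa_eq_insert_insert (u := u) (v := v) hnr]
  rw [Finset.prod_insert hUD, Finset.prod_insert hAD, Finset.prod_insert hBD,
    Finset.prod_union (disjoint_compOf hnr)]
  ring

lemma clusterProd_insert_reach (huv : u ≠ v) (hr : (fE Z).Reachable u v) (μ : V → ℝ) :
    clusterProd (insert s(u,v) Z) μ = clusterProd Z μ := by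
  unfold clusterProd
  rw [kappa_insert_of_reachable huv hr]

end merge2

section numeric
variable {μ ν : V → ℝ}

lemma clusterProd_pos (hμ : ∀ x, 0 < μ x) (S : Finset (Sym2 V)) : 0 < clusterProd S μ := by
  unfold clusterProd
  refine Finset.prod_pos fun C _ => ?_
  have : 0 < ∏ x ∈ C, μ x := Finset.prod_pos fun x _ => hμ x
  linarith

/-- Core inequality: inserting one non-diagonal edge changes the clusterProd ratio
between two weight functions in `(0,1]` by a factor of at most 2. -/
lemma core_insert (hμ : ∀ x, 0 < μ x ∧ μ x ≤ 1) (hν : ∀ x, 0 < ν x ∧ ν x ≤ 1)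
    {e : Sym2 V} (hd : ¬e.IsDiag) (Z : Finset (Sym2 V)) :
    clusterProd (insert e Z) ν * clusterProd Z μ ≤
      2 * (clusterProd Z ν * clusterProd (insert e Z) μ) := by
  induction e using Sym2.ind with
  | _ u v =>
  have huv : u ≠ v := by simpa [Sym2.isDiag_iff_proj_eq] using hd
  by_cases hr : (fE Z).Reachable u v
  · rw [clusterProd_insert_reach huv hr, clusterProd_insert_reach huv hr]
    have h1 := clusterProd_pos (fun x => (hμ x).1) Z
    have h2 := clusterProd_pos (fun x => (hν x).1) Z
    nlinarith
  · set a := ∏ x ∈ compOf Z u, μ x with ha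
    set b := ∏ x ∈ compOf Z v, μ x with hb
    set c := ∏ x ∈ compOf Z u, ν x with hc
    set d := ∏ x ∈ compOf Z v, ν x with hdd
    have hap : 0 < a := Finset.prod_pos fun x _ => (hμ x).1
    have hbp : 0 < b := Finset.prod_pos fun x _ => (hμ x).1
    have hcp : 0 < c := Finset.prod_pos fun x _ => (hν x).1
    have hdp : 0 < d := Finset.prod_pos fun x _ => (hν x).1
    have ha1 : a ≤ 1 := Finset.prod_le_one (fun x _ => (hμ x).1.le) (fun x _ => (hμ x).2)
    have hb1 : b ≤ 1 := Finset.prod_le_one (fun x _ => (hμ x).1.le) (fun x _ => (hμ x).2)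
    have eq1 := clusterProd_insert_merge huv hr μ
    have eq2 := clusterProd_insert_merge huv hr ν
    rw [← ha, ← hb] at eq1
    rw [← hc, ← hdd] at eq2
    set X := clusterProd Z μ
    set Y := clusterProd (insert s(u,v) Z) μ
    set X' := clusterProd Z ν
    set Y' := clusterProd (insert s(u,v) Z) ν
    have hX : 0 < X := clusterProd_pos (fun x => (hμ x).1) Z
    have hX' : 0 < X' := clusterProd_pos (fun x => (hν x).1) Z
    have k1 : 1 + c * d ≤ (1 + c) * (1 + d) := by nlinarith
    have k2 : (1 + a) * (1 + b) ≤ 2 * (1 + a * b) := by nlinarith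
    have key : (1 + c * d) * ((1 + a) * (1 + b)) ≤
        ((1 + c) * (1 + d)) * (2 * (1 + a * b)) :=
      mul_le_mul k1 k2 (by nlinarith) (by nlinarith)
    have hP : (0:ℝ) < ((1 + c) * (1 + d)) * ((1 + a) * (1 + b)) :=
      mul_pos (mul_pos (by linarith) (by linarith)) (mul_pos (by linarith) (by linarith))
    rw [← mul_le_mul_iff_of_pos_right hP]
    have lhs_eq : Y' * X * ((1 + c) * (1 + d) * ((1 + a) * (1 + b))) =
        (X' * (1 + c * d)) * (X * ((1 + a) * (1 + b))) := by
      linear_combination (X * ((1 + a) * (1 + b))) * eq2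
    have rhs_eq : 2 * (X' * Y) * ((1 + c) * (1 + d) * ((1 + a) * (1 + b))) =
        (X' * X) * (((1 + c) * (1 + d)) * (2 * (1 + a * b))) := by
      linear_combination (2 * X' * ((1 + c) * (1 + d))) * eq1
    rw [lhs_eq, rhs_eq]
    calc (X' * (1 + c * d)) * (X * ((1 + a) * (1 + b)))
        = (X' * X) * ((1 + c * d) * ((1 + a) * (1 + b))) := by ring
      _ ≤ (X' * X) * (((1 + c) * (1 + d)) * (2 * (1 + a * b))) :=
          mul_le_mul_of_nonneg_left key (by positivity)

end numeric

section main
variable {E₀ Z Z' S : Finset (Sym2 V)} {q : Sym2 V → ℝ} {μ ν : V → ℝ}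

lemma wt_pos (hq : ∀ e ∈ E₀, 0 < q e ∧ q e < 1) (hμ : ∀ x, 0 < μ x) (hS : S ⊆ E₀) :
    0 < wtWRC E₀ q μ S := by
  refine mul_pos (mul_pos ?_ ?_) (clusterProd_pos hμ S)
  · exact Finset.prod_pos fun e he => (hq e (hS he)).1
  · refine Finset.prod_pos fun f hf => ?_
    have := (hq f (Finset.mem_sdiff.mp hf).1).2
    linarith

lemma ZWRC_pos (hq : ∀ e ∈ E₀, 0 < q e ∧ q e < 1) (hμ : ∀ x, 0 < μ x) :
    0 < ZWRC E₀ q μ := by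
  refine Finset.sum_pos (fun S hS => wt_pos hq hμ (Finset.mem_powerset.mp hS)) ?_
  exact ⟨∅, Finset.mem_powerset.mpr (Finset.empty_subset _)⟩

lemma piWRC_pos (hq : ∀ e ∈ E₀, 0 < q e ∧ q e < 1) (hμ : ∀ x, 0 < μ x) (hS : S ⊆ E₀) :
    0 < piWRC E₀ q μ S := div_pos (wt_pos hq hμ hS) (ZWRC_pos hq hμ)

lemma pi_ratio_eq (hq : ∀ e ∈ E₀, 0 < q e ∧ q e < 1) (hμ : ∀ x, 0 < μ x) :
    piWRC E₀ q μ Z' / piWRC E₀ q μ Z = wtWRC E₀ q μ Z' / wtWRC E₀ q μ Z := by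
  unfold piWRC
  rw [div_div_div_comm, div_self (ZWRC_pos hq hμ).ne', div_one]

lemma core_symmDiff (hμ : ∀ x, 0 < μ x ∧ μ x ≤ 1) (hν : ∀ x, 0 < ν x ∧ ν x ≤ 1)
    (hdiag : ∀ e ∈ symmDiff Z Z', ¬e.IsDiag) (h1 : (symmDiff Z Z').card = 1) :
    clusterProd Z' ν * clusterProd Z μ ≤ 2 * (clusterProd Z ν * clusterProd Z' μ) := by
  obtain ⟨e, he⟩ := Finset.card_eq_one.mp h1
  have hd : ¬e.IsDiag := hdiag e (he ▸ Finset.mem_singleton_self e)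
  have hee : e ∈ symmDiff Z Z' := he ▸ Finset.mem_singleton_self e
  rw [Finset.mem_symmDiff] at hee
  have hext : ∀ f, f ∈ symmDiff Z Z' ↔ f = e := by
    intro f
    rw [he, Finset.mem_singleton]
  rcases hee with ⟨heZ, heZ'⟩ | ⟨heZ', heZ⟩
  · -- Z = insert e Z'
    have hZeq : Z = insert e Z' := by
      ext f
      have hf := hext f
      rw [Finset.mem_symmDiff] at hf
      rw [Finset.mem_insert]
      by_cases hfe : f = e
      · subst hfe; tauto
      · tauto
    subst hZeq
    linarith [core_insert hν hμ hd Z']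
  · have hZeq : Z' = insert e Z := by
      ext f
      have hf := hext f
      rw [Finset.mem_symmDiff] at hf
      rw [Finset.mem_insert]
      by_cases hfe : f = e
      · subst hfe; tauto
      · tauto
    subst hZeq
    linarith [core_insert hμ hν hd Z]

lemma wt_core (hq : ∀ e ∈ E₀, 0 < q e ∧ q e < 1)
    (hμ : ∀ x, 0 < μ x ∧ μ x ≤ 1) (hν : ∀ x, 0 < ν x ∧ ν x ≤ 1)
    (hZ : Z ⊆ E₀) (hZ' : Z' ⊆ E₀)
    (hdiag : ∀ e ∈ symmDiff Z Z', ¬e.IsDiag) (h1 : (symmDiff Z Z').card = 1) :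
    wtWRC E₀ q ν Z' * wtWRC E₀ q μ Z ≤ 2 * (wtWRC E₀ q ν Z * wtWRC E₀ q μ Z') := by
  have hcore := core_symmDiff hμ hν hdiag h1
  unfold wtWRC
  set eZ := (∏ e ∈ Z, q e) * (∏ f ∈ E₀ \ Z, (1 - q f)) with heZ
  set eZ' := (∏ e ∈ Z', q e) * (∏ f ∈ E₀ \ Z', (1 - q f)) with heZ'
  have hpZ : 0 < eZ := by
    refine mul_pos (Finset.prod_pos fun e he => (hq e (hZ he)).1)
      (Finset.prod_pos fun f hf => ?_)
    have := (hq f (Finset.mem_sdiff.mp hf).1).2; linarith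
  have hpZ' : 0 < eZ' := by
    refine mul_pos (Finset.prod_pos fun e he => (hq e (hZ' he)).1)
      (Finset.prod_pos fun f hf => ?_)
    have := (hq f (Finset.mem_sdiff.mp hf).1).2; linarith
  have hpp : 0 < eZ * eZ' := mul_pos hpZ hpZ'
  nlinarith [mul_le_mul_of_nonneg_left hcore hpp.le]

lemma min_one_le_two_mul {r r' : ℝ} (hr : 0 < r) (h : r' ≤ 2 * r) :
    min 1 r' ≤ 2 * min 1 r := by
  simp only [min_def]
  split_ifs <;> linarith

lemma PEF_diag_bounds (hq : ∀ e ∈ E₀, 0 < q e ∧ q e < 1) (hμ : ∀ x, 0 < μ x)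
    (hZ : Z ⊆ E₀) :
    1 / 2 ≤ PEF E₀ (piWRC E₀ q μ) Z Z ∧ PEF E₀ (piWRC E₀ q μ) Z Z ≤ 1 := by
  rw [PEF, if_pos rfl]
  rcases E₀.eq_empty_or_nonempty with rfl | hne
  · norm_num
  have hm : (0:ℝ) < E₀.card := by exact_mod_cast Finset.card_pos.mpr hne
  have hterm : ∀ e ∈ E₀, min 1 (piWRC E₀ q μ (symmDiff Z {e}) / piWRC E₀ q μ Z) ≤ 1 :=
    fun e he => min_le_left _ _
  have hterm0 : ∀ e ∈ E₀, 0 ≤ min 1 (piWRC E₀ q μ (symmDiff Z {e}) / piWRC E₀ q μ Z) := by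
    intro e he
    refine le_min one_pos.le (div_nonneg (piWRC_pos hq hμ ?_).le (piWRC_pos hq hμ hZ).le)
    intro f hf
    rw [Finset.mem_symmDiff] at hf
    rcases hf with ⟨h1, _⟩ | ⟨h1, _⟩
    · exact hZ h1
    · rwa [Finset.mem_singleton.mp h1]
  have hsum_le : ∑ e ∈ E₀, min 1 (piWRC E₀ q μ (symmDiff Z {e}) / piWRC E₀ q μ Z)
      ≤ (E₀.card : ℝ) := by
    calc _ ≤ ∑ _e ∈ E₀, (1:ℝ) := Finset.sum_le_sum hterm
    _ = (E₀.card : ℝ) := by simp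
  have hsum0 : 0 ≤ ∑ e ∈ E₀, min 1 (piWRC E₀ q μ (symmDiff Z {e}) / piWRC E₀ q μ Z) :=
    Finset.sum_nonneg hterm0
  have h2m : (0:ℝ) < 1 / (2 * (E₀.card : ℝ)) := by positivity
  constructor
  · have : (1 / (2 * (E₀.card : ℝ))) *
        (∑ e ∈ E₀, min 1 (piWRC E₀ q μ (symmDiff Z {e}) / piWRC E₀ q μ Z))
        ≤ (1 / (2 * (E₀.card : ℝ))) * (E₀.card : ℝ) := by
      exact mul_le_mul_of_nonneg_left hsum_le h2m.le
    have heq : (1 / (2 * (E₀.card : ℝ))) * (E₀.card : ℝ) = 1 / 2 := by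
      field_simp
    linarith
  · nlinarith

end main

/-- Comparison of the transition probabilities of the edge-flipping dynamics for the weighted
random cluster model and its perturbed version: for transitions `(Z,Z')` with `|Z ⊕ Z'| ≤ 1`,
the ratio of the two transition probabilities lies in `[1/2, 2]`. -/
theorem wrc_perturb_tran_ratio {V : Type*} [Fintype V] [DecidableEq V]
    (G : SimpleGraph V) [DecidableRel G.Adj]
    (p : Sym2 V → ℝ) (lam η ηh lamh : V → ℝ)
    (hp : ∀ e ∈ G.edgeFinset, 0 < p e ∧ p e < 1 / 2)
    (hlam : ∀ v : V, 0 < lam v ∧ lam v ≤ 1)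
    (hη : ∀ v : V, η v = (1 - lam v) / (1 + lam v))
    (hηh : ∀ v : V, ηh v =
      if η v ≤ 1 / (Fintype.card V : ℝ) then 1 / (Fintype.card V : ℝ) else η v)
    (hlamh : ∀ v : V, lamh v = (1 - ηh v) / (1 + ηh v)) :
    ∀ Z ∈ G.edgeFinset.powerset, ∀ Z' ∈ G.edgeFinset.powerset,
      (symmDiff Z Z').card ≤ 1 →
      1 / 2 ≤ PEF G.edgeFinset (piWRC G.edgeFinset (fun e => 2 * p e) lamh) Z Z' /
          PEF G.edgeFinset (piWRC G.edgeFinset (fun e => 2 * p e) lam) Z Z' ∧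
        PEF G.edgeFinset (piWRC G.edgeFinset (fun e => 2 * p e) lamh) Z Z' /
          PEF G.edgeFinset (piWRC G.edgeFinset (fun e => 2 * p e) lam) Z Z' ≤ 2 := by

  intro Z hZ Z' hZ' hcard
  rw [Finset.mem_powerset] at hZ hZ'
  have hq : ∀ e ∈ G.edgeFinset, 0 < 2 * p e ∧ 2 * p e < 1 := fun e he =>
    ⟨by linarith [(hp e he).1], by linarith [(hp e he).2]⟩
  by_cases hE : G.edgeFinset = ∅
  · have hZe : Z = ∅ := Finset.subset_empty.mp (hE ▸ hZ)
    have hZe' : Z' = ∅ := Finset.subset_empty.mp (hE ▸ hZ')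
    subst hZe hZe'
    simp only [PEF, if_pos rfl, hE, Finset.sum_empty, mul_zero, sub_zero]
    norm_num
  · obtain ⟨e₀, he₀⟩ := Finset.nonempty_iff_ne_empty.mpr hE
    have hn2 : 1 < Fintype.card V := by
      have hd₀ : ¬e₀.IsDiag :=
        G.not_isDiag_of_mem_edgeSet (SimpleGraph.mem_edgeFinset.mp he₀)
      clear he₀
      revert hd₀
      induction e₀ using Sym2.ind with
      | _ u v =>
        intro hd
        exact Fintype.one_lt_card_iff.mpr ⟨u, v, by simpa using hd⟩
    have hnR : (2:ℝ) ≤ (Fintype.card V : ℝ) := by exact_mod_cast hn2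
    have hn0 : (0:ℝ) < (Fintype.card V : ℝ) := by linarith
    have hlamh2 : ∀ v, 0 < lamh v ∧ lamh v ≤ 1 := by
      intro v
      have h1 := (hlam v).1
      have h2 := (hlam v).2
      have hηv : 0 ≤ η v ∧ η v < 1 := by
        rw [hη v]
        constructor
        · apply div_nonneg <;> linarith
        · rw [div_lt_one (by linarith)]; linarith
      have h1n : (0:ℝ) < 1 / (Fintype.card V : ℝ) := div_pos one_pos hn0
      have h1n1 : 1 / (Fintype.card V : ℝ) < 1 := (div_lt_one hn0).mpr (by linarith)
      have hηhv : 0 < ηh v ∧ ηh v < 1 := by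
        rw [hηh v]
        split_ifs with h
        · exact ⟨h1n, h1n1⟩
        · push_neg at h
          exact ⟨lt_trans h1n h, hηv.2⟩
      rw [hlamh v]
      constructor
      · apply div_pos <;> linarith [hηhv.1, hηhv.2]
      · rw [div_le_one (by linarith [hηhv.1])]
        linarith [hηhv.1]
    rcases Nat.le_one_iff_eq_zero_or_eq_one.mp hcard with h0 | h1
    · have hemp : symmDiff Z Z' = ∅ := Finset.card_eq_zero.mp h0
      have hZZ : Z = Z' := symmDiff_eq_bot.mp (by rw [Finset.bot_eq_empty]; exact hemp)
      subst hZZ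
      obtain ⟨hl1, hl2⟩ := PEF_diag_bounds hq (fun x => (hlam x).1) hZ
      obtain ⟨hh1, hh2⟩ := PEF_diag_bounds hq (fun x => (hlamh2 x).1) hZ
      constructor
      · rw [le_div_iff₀ (by linarith)]; linarith
      · rw [div_le_iff₀ (by linarith)]; linarith
    · have hne : Z ≠ Z' := by
        intro h
        subst h
        rw [symmDiff_self] at h1
        simp at h1
      have hdsub : symmDiff Z Z' ⊆ G.edgeFinset := by
        intro f hf
        rw [Finset.mem_symmDiff] at hf
        rcases hf with ⟨ha, _⟩ | ⟨ha, _⟩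
        · exact hZ ha
        · exact hZ' ha
      have hdiag : ∀ e ∈ symmDiff Z Z', ¬e.IsDiag := fun e he =>
        G.not_isDiag_of_mem_edgeSet (SimpleGraph.mem_edgeFinset.mp (hdsub he))
      simp only [PEF, if_neg hne, if_pos h1]
      have hm : (0:ℝ) < (G.edgeFinset.card : ℝ) := by
        exact_mod_cast Finset.card_pos.mpr ⟨e₀, he₀⟩
      have hc : (1 / (2 * (G.edgeFinset.card : ℝ))) ≠ 0 :=
        (div_pos one_pos (by linarith)).ne'
      rw [mul_div_mul_left _ _ hc]
      have hwZ : 0 < wtWRC G.edgeFinset (fun e => 2 * p e) lam Z :=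
        wt_pos hq (fun x => (hlam x).1) hZ
      have hwZ' : 0 < wtWRC G.edgeFinset (fun e => 2 * p e) lam Z' :=
        wt_pos hq (fun x => (hlam x).1) hZ'
      have hhwZ : 0 < wtWRC G.edgeFinset (fun e => 2 * p e) lamh Z :=
        wt_pos hq (fun x => (hlamh2 x).1) hZ
      have hhwZ' : 0 < wtWRC G.edgeFinset (fun e => 2 * p e) lamh Z' :=
        wt_pos hq (fun x => (hlamh2 x).1) hZ'
      set r := piWRC G.edgeFinset (fun e => 2 * p e) lam Z' /
        piWRC G.edgeFinset (fun e => 2 * p e) lam Z with hrdef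
      set rh := piWRC G.edgeFinset (fun e => 2 * p e) lamh Z' /
        piWRC G.edgeFinset (fun e => 2 * p e) lamh Z with hrhdef
      have hre : r = wtWRC G.edgeFinset (fun e => 2 * p e) lam Z' /
          wtWRC G.edgeFinset (fun e => 2 * p e) lam Z :=
        pi_ratio_eq hq (fun x => (hlam x).1)
      have hrhe : rh = wtWRC G.edgeFinset (fun e => 2 * p e) lamh Z' /
          wtWRC G.edgeFinset (fun e => 2 * p e) lamh Z :=
        pi_ratio_eq hq (fun x => (hlamh2 x).1)
      have hr : 0 < r := by rw [hre]; exact div_pos hwZ' hwZ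
      have hrh : 0 < rh := by rw [hrhe]; exact div_pos hhwZ' hhwZ
      have hub : rh ≤ 2 * r := by
        rw [hre, hrhe, mul_div_assoc' 2]
        rw [div_le_div_iff₀ hhwZ hwZ]
        linarith [wt_core hq hlam hlamh2 hZ hZ' hdiag h1]
      have hlb : r ≤ 2 * rh := by
        rw [hre, hrhe, mul_div_assoc' 2]
        rw [div_le_div_iff₀ hwZ hhwZ]
        linarith [wt_core hq hlamh2 hlam hZ hZ' hdiag h1]
      have k1 : min 1 rh ≤ 2 * min 1 r := min_one_le_two_mul hr hub
      have k2 : min 1 r ≤ 2 * min 1 rh := min_one_le_two_mul hrh hlb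
      have hminr : 0 < min 1 r := lt_min one_pos hr
      constructor
      · rw [le_div_iff₀ hminr]; linarith
      · rw [div_le_iff₀ hminr]; linarith


end
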